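/- Let N, D be positive natural numbers, let S ∈ ℝ^{N×D} have orthonormal columns, and set Q := SSᵀ. Let h̃₀ ∈ ℝ^D and h₀ := S h̃₀, let s ∈ ℝ^N with s̃ := Sᵀs ≠ 0, let c > 0, and define H⁻ := { h ∈ ℝ^N : ⟨h − h₀, s⟩ + c ≤ 0 } and H̃⁻ := { h̃ ∈ ℝ^D : ⟨h̃ − h̃₀, s̃⟩ + c ≤ 0 }. Then the metric projection of h₀ onto H⁻ ∩ R(S) equals S applied to the metric projection of h̃₀ onto H̃⁻; that is, P_{H⁻ ∩ R(S)}(h₀) = S · P_{H̃⁻}(h̃₀). -/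

import Mathlib

open Matrix
open scoped RealInnerProductSpace

lemma my_inner_eq_dot {n : ℕ} (x y : EuclideanSpace ℝ (Fin n)) :
    ⟪x, y⟫ = (WithLp.equiv 2 _ x) ⬝ᵥ (WithLp.equiv 2 _ y) := by
  simp [PiLp.inner_apply, dotProduct, RCLike.inner_apply, mul_comm]

lemma my_adj {N D : ℕ} (A : Matrix (Fin N) (Fin D) ℝ) (u : EuclideanSpace ℝ (Fin D))
    (v : EuclideanSpace ℝ (Fin N)) :
    ⟪toEuclideanLin A u, v⟫ = ⟪u, toEuclideanLin Aᵀ v⟫ := by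
  simp only [my_inner_eq_dot, WithLp.equiv_apply, ofLp_toEuclideanLin_apply]
  rw [dotProduct_comm, dotProduct_mulVec, ← mulVec_transpose]
  rw [dotProduct_comm]

lemma my_iso {N D : ℕ} (S : Matrix (Fin N) (Fin D) ℝ) (hS : Sᵀ * S = 1)
    (y : EuclideanSpace ℝ (Fin D)) : ‖toEuclideanLin S y‖ = ‖y‖ := by
  have h : ⟪toEuclideanLin S y, toEuclideanLin S y⟫ = ⟪y, y⟫ := by
    rw [my_adj]
    congr 1
    rw [toEuclideanLin_apply, toEuclideanLin_apply]
    simp [mulVec_mulVec, hS]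
  rw [norm_eq_sqrt_real_inner, h, ← norm_eq_sqrt_real_inner]

/-- With `h₀ := S h̃₀`, `s̃ := Sᵀs ≠ 0`, `c > 0`,
`H⁻ := {h ∈ ℝ^N : ⟨h − h₀, s⟩ + c ≤ 0}` and `H̃⁻ := {h̃ ∈ ℝ^D : ⟨h̃ − h̃₀, s̃⟩ + c ≤ 0}`,
the metric projection of `h₀` onto `H⁻ ∩ R(S)` equals `S` applied to the metric
projection of `h̃₀` onto `H̃⁻`: if `pt` is the metric projection of `h̃₀` onto `H̃⁻`,
then `S pt` is the metric projection of `h₀` onto `H⁻ ∩ R(S)`. -/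
theorem stmt_16 (N D : ℕ) (hN : 0 < N) (hD : 0 < D)
    (S : Matrix (Fin N) (Fin D) ℝ) (hS : Sᵀ * S = 1)
    (ht₀ : EuclideanSpace ℝ (Fin D))
    (h₀ : EuclideanSpace ℝ (Fin N)) (hh₀ : h₀ = toEuclideanLin S ht₀)
    (s : EuclideanSpace ℝ (Fin N))
    (st : EuclideanSpace ℝ (Fin D)) (hst : st = toEuclideanLin Sᵀ s)
    (hstne : st ≠ 0)
    (c : ℝ) (hc : 0 < c)
    (pt : EuclideanSpace ℝ (Fin D))
    (hpt_mem : ⟪pt - ht₀, st⟫ + c ≤ 0)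
    (hpt_min : ∀ xt : EuclideanSpace ℝ (Fin D), ⟪xt - ht₀, st⟫ + c ≤ 0 →
      ‖ht₀ - pt‖ ≤ ‖ht₀ - xt‖) :
    (⟪toEuclideanLin S pt - h₀, s⟫ + c ≤ 0) ∧
    (∃ z : EuclideanSpace ℝ (Fin D), toEuclideanLin S z = toEuclideanLin S pt) ∧
    (∀ x : EuclideanSpace ℝ (Fin N), ⟪x - h₀, s⟫ + c ≤ 0 →
      (∃ z : EuclideanSpace ℝ (Fin D), toEuclideanLin S z = x) →
      ‖h₀ - toEuclideanLin S pt‖ ≤ ‖h₀ - x‖) := by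
  have key : ∀ y : EuclideanSpace ℝ (Fin D),
      ⟪toEuclideanLin S y - h₀, s⟫ = ⟪y - ht₀, st⟫ := by
    intro y
    rw [hh₀, ← map_sub, my_adj, ← hst]
  refine ⟨by rw [key]; exact hpt_mem, ⟨pt, rfl⟩, ?_⟩
  rintro x hx ⟨z, rfl⟩
  rw [key] at hx
  have := hpt_min z hx
  rw [hh₀, ← map_sub, ← map_sub, my_iso S hS, my_iso S hS]
  exact this
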